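/- Let 1 ≤ k < n be integers and ζ ∈ ℂ with |ζ| = 1. Set F(z) = z^k(1 − z)^{n−k}, G(z) = (1 − ζz^k)/(1 − ζz^n), and μ(z) = (z + i)/(z − i). Pick ρ ∈ ℂ with ρ² = ζ^{−(n−k)}, and set f(z) = ρ·F(z) and g(z) = G(μ(z)). Then f ∘ g ∈ ℝ(z), i.e. the composition f(g(z)) has real coefficients. -/

import Mathlib

noncomputable section

/-- A rational function over `ℂ` has real coefficients (i.e. lies in `ℝ(z)`). -/
def RatFunc.IsReal (f : RatFunc ℂ) : Prop :=
  (∀ n, (f.num.coeff n).im = 0) ∧ (∀ n, (f.denom.coeff n).im = 0)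

/-- The Möbius function `μ(z) = (z + i)/(z - i)` as a rational function. -/
def μ : RatFunc ℂ := (RatFunc.X + RatFunc.C Complex.I) / (RatFunc.X - RatFunc.C Complex.I)

/-- `G(μ(z))` where `G(z) = (1 - ζ z^k)/(1 - ζ z^n)`. -/
def Gμ (n k : ℕ) (ζ : ℂ) : RatFunc ℂ :=
  (1 - RatFunc.C ζ * μ ^ k) / (1 - RatFunc.C ζ * μ ^ n)

open Polynomial

/-- Coefficientwise complex conjugation on `RatFunc ℂ`. -/
def σ : RatFunc ℂ →+* RatFunc ℂ :=
  RatFunc.mapRingHom (Polynomial.mapRingHom (starRingEnd ℂ))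
    (fun p hp => by
      simp only [Submonoid.mem_comap, mem_nonZeroDivisors_iff_ne_zero] at *
      simpa [Polynomial.map_eq_zero] using hp)

lemma σ_algebraMap (p : ℂ[X]) :
    σ (algebraMap _ _ p) = algebraMap ℂ[X] (RatFunc ℂ) (p.map (starRingEnd ℂ)) := by
  simp [σ, RatFunc.coe_mapRingHom_eq_coe_map, RatFunc.map_apply]

lemma σ_C (a : ℂ) : σ (RatFunc.C a) = RatFunc.C ((starRingEnd ℂ) a) := by
  rw [← RatFunc.algebraMap_C, σ_algebraMap]; simp

lemma σ_X : σ (RatFunc.X) = RatFunc.X := by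
  rw [← RatFunc.algebraMap_X, σ_algebraMap]; simp

/-- A rational function fixed by coefficientwise conjugation is real. -/
lemma isReal_of_fixed {f : RatFunc ℂ} (h : σ f = f) : f.IsReal := by
  have hq0 : f.denom ≠ 0 := f.denom_ne_zero
  have hq0' : f.denom.map (starRingEnd ℂ) ≠ 0 := by simpa [Polynomial.map_eq_zero] using hq0
  have h1 : σ f = algebraMap ℂ[X] (RatFunc ℂ) (f.num.map (starRingEnd ℂ)) /
      algebraMap _ _ (f.denom.map (starRingEnd ℂ)) := by
    conv_lhs => rw [← f.num_div_denom]
    rw [map_div₀, σ_algebraMap, σ_algebraMap]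
  rw [h] at h1
  conv_lhs at h1 => rw [← f.num_div_denom]
  rw [div_eq_div_iff (RatFunc.algebraMap_ne_zero hq0) (RatFunc.algebraMap_ne_zero hq0'),
    ← map_mul, ← map_mul] at h1
  have key : f.num * f.denom.map (starRingEnd ℂ) = f.num.map (starRingEnd ℂ) * f.denom :=
    IsFractionRing.injective ℂ[X] (RatFunc ℂ) h1
  have hcop : IsCoprime f.num f.denom := f.isCoprime_num_denom
  have hcop' : IsCoprime (f.num.map (starRingEnd ℂ)) (f.denom.map (starRingEnd ℂ)) :=
    hcop.map (Polynomial.mapRingHom (starRingEnd ℂ))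
  have hd1 : f.denom ∣ f.denom.map (starRingEnd ℂ) :=
    hcop.symm.dvd_of_dvd_mul_left ⟨f.num.map (starRingEnd ℂ), by linear_combination key⟩
  have hd2 : f.denom.map (starRingEnd ℂ) ∣ f.denom :=
    hcop'.symm.dvd_of_dvd_mul_left ⟨f.num, by linear_combination -key⟩
  have hdenom : f.denom.map (starRingEnd ℂ) = f.denom :=
    Polynomial.eq_of_monic_of_associated ((RatFunc.monic_denom f).map _) (RatFunc.monic_denom f)
      (associated_of_dvd_dvd hd2 hd1)
  rw [hdenom] at key
  have hnum : f.num.map (starRingEnd ℂ) = f.num := (mul_right_cancel₀ hq0 key).symm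
  refine ⟨fun n => ?_, fun n => ?_⟩
  · have := congrArg (fun p => Polynomial.coeff p n) hnum
    simp only [Polynomial.coeff_map] at this
    exact Complex.conj_eq_iff_im.mp this
  · have := congrArg (fun p => Polynomial.coeff p n) hdenom
    simp only [Polynomial.coeff_map] at this
    exact Complex.conj_eq_iff_im.mp this

lemma hA_ne : (Polynomial.X + Polynomial.C Complex.I : ℂ[X]) ≠ 0 := by
  intro h
  have := congrArg (Polynomial.eval 0) h
  simp [Complex.I_ne_zero] at this

lemma hB_ne : (Polynomial.X - Polynomial.C Complex.I : ℂ[X]) ≠ 0 := by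
  intro h
  have := congrArg (Polynomial.eval 0) h
  simp [Complex.I_ne_zero] at this

lemma μ_def : μ = algebraMap ℂ[X] (RatFunc ℂ) (Polynomial.X + Polynomial.C Complex.I) /
    algebraMap _ _ (Polynomial.X - Polynomial.C Complex.I) := by
  rw [μ]; simp [map_add, map_sub, RatFunc.algebraMap_X, RatFunc.algebraMap_C]

lemma μ_ne : μ ≠ 0 := by
  rw [μ_def]
  exact div_ne_zero (RatFunc.algebraMap_ne_zero hA_ne) (RatFunc.algebraMap_ne_zero hB_ne)

lemma σ_μ : σ μ = μ⁻¹ := by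
  rw [μ, map_div₀, map_add, map_sub, σ_X, σ_C, Complex.conj_I, map_neg, inv_div]
  congr 1 <;> ring

lemma denom_ne {ζ : ℂ} (hζ0 : ζ ≠ 0) {j : ℕ} (hj : 1 ≤ j) :
    (1 : RatFunc ℂ) - RatFunc.C ζ * μ ^ j ≠ 0 := by
  intro h
  rw [sub_eq_zero, eq_comm] at h
  have hB : algebraMap ℂ[X] (RatFunc ℂ) (Polynomial.X - Polynomial.C Complex.I) ≠ 0 :=
    RatFunc.algebraMap_ne_zero hB_ne
  rw [μ_def, div_pow, ← RatFunc.algebraMap_C, mul_div_assoc',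
    div_eq_iff (pow_ne_zero _ hB), one_mul] at h
  rw [← map_pow, ← map_pow, ← map_mul] at h
  have hpoly := IsFractionRing.injective ℂ[X] (RatFunc ℂ) h
  have := congrArg (Polynomial.eval Complex.I) hpoly
  simp only [Polynomial.eval_mul, Polynomial.eval_pow, Polynomial.eval_add, Polynomial.eval_sub,
    Polynomial.eval_X, Polynomial.eval_C, sub_self, zero_pow (by omega : j ≠ 0)] at this
  have h2 : Complex.I + Complex.I ≠ 0 := by
    simpa using Complex.I_ne_zero
  exact (mul_ne_zero hζ0 (pow_ne_zero _ h2)) this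

/-- **Example.** For `1 ≤ k < n`, `|ζ| = 1`, `F(z) = z^k (1-z)^{n-k}`,
`G(z) = (1 - ζ z^k)/(1 - ζ z^n)`, `μ(z) = (z+i)/(z-i)`, `ρ² = ζ^{-(n-k)}`,
`f = ρ F` and `g = G ∘ μ`, the composition `f ∘ g` lies in `ℝ(z)`. -/
theorem fg_real (n k : ℕ) (hk : 1 ≤ k) (hkn : k < n) (ζ : ℂ) (hζ : ‖ζ‖ = 1)
    (ρ : ℂ) (hρ : ρ ^ 2 = (ζ ^ (n - k))⁻¹) :
    (RatFunc.C ρ * ((Gμ n k ζ) ^ k * (1 - Gμ n k ζ) ^ (n - k))).IsReal := by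
  set m := n - k with hmdef
  have hn : n = k + m := by omega
  have hm1 : 1 ≤ m := by omega
  have hζ0 : ζ ≠ 0 := by intro h; rw [h] at hζ; simp at hζ
  have hCζ : RatFunc.C ζ ≠ 0 := by
    rw [← RatFunc.algebraMap_C]
    exact RatFunc.algebraMap_ne_zero (by simpa using hζ0)
  have hζconj : ζ * (starRingEnd ℂ) ζ = 1 := by
    rw [Complex.mul_conj, Complex.normSq_eq_norm_sq, hζ]; norm_num
  have hconjζ : (starRingEnd ℂ) ζ = ζ⁻¹ :=
    eq_inv_of_mul_eq_one_left (by linear_combination hζconj)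
  have hD : (1 : RatFunc ℂ) - RatFunc.C ζ * μ ^ n ≠ 0 := denom_ne hζ0 (by omega)
  have hD' : (1 : RatFunc ℂ) - RatFunc.C ζ * μ ^ (k + m) ≠ 0 := hn ▸ hD
  have hσD : σ (1 - RatFunc.C ζ * μ ^ n) ≠ 0 := fun hx =>
    hD (σ.injective (by rw [hx, map_zero]))
  set e := Gμ n k ζ with he
  have heD : e * (1 - RatFunc.C ζ * μ ^ n) = 1 - RatFunc.C ζ * μ ^ k := by
    rw [he, Gμ]; exact div_mul_cancel₀ _ hD
  have hσsub : ∀ j : ℕ, σ (1 - RatFunc.C ζ * μ ^ j) = 1 - (RatFunc.C ζ)⁻¹ * μ⁻¹ ^ j := by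
    intro j
    rw [map_sub, map_one, map_mul, map_pow, σ_C, σ_μ, hconjζ, map_inv₀]
  have hσe : σ e = μ ^ m * e := by
    have h1 : σ e * σ (1 - RatFunc.C ζ * μ ^ n) = σ (1 - RatFunc.C ζ * μ ^ k) := by
      rw [← map_mul, heD]
    have h2 : (μ ^ m * e) * σ (1 - RatFunc.C ζ * μ ^ n) = σ (1 - RatFunc.C ζ * μ ^ k) := by
      rw [hσsub, hσsub, he, Gμ, hn]
      simp only [inv_pow]
      field_simp [μ_ne, hD']
      ring
    exact mul_right_cancel₀ hσD (h1.trans h2.symm)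
  have hσ1e : σ (1 - e) = (RatFunc.C ζ)⁻¹ * μ⁻¹ ^ k * (1 - e) := by
    rw [map_sub, map_one, hσe, he, Gμ, hn]
    simp only [inv_pow]
    field_simp [μ_ne, hD']
    ring
  have hρ0 : ρ ≠ 0 := by
    intro h; rw [h] at hρ
    simp [pow_ne_zero, hζ0] at hρ
    exact pow_ne_zero m hζ0 hρ.symm
  have habsρ : ‖ρ‖ = 1 := by
    have h1 : ‖ρ‖ ^ 2 = 1 := by
      rw [← norm_pow, hρ, norm_inv, norm_pow, hζ]; norm_num
    nlinarith [norm_nonneg ρ]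
  have habs : ρ * (starRingEnd ℂ) ρ = 1 := by
    rw [Complex.mul_conj, Complex.normSq_eq_norm_sq, habsρ]; norm_num
  have h2 : ρ ^ 2 * ζ ^ m = 1 := by
    rw [hρ]; exact inv_mul_cancel₀ (pow_ne_zero _ hζ0)
  have hkey : (starRingEnd ℂ) ρ = ρ * ζ ^ m := by
    linear_combination (-(starRingEnd ℂ) ρ) * h2 + ρ * ζ ^ m * habs
  apply isReal_of_fixed
  rw [map_mul, map_mul, map_pow, map_pow, σ_C, hσe, hσ1e, hkey, map_mul, map_pow]
  simp only [inv_pow, mul_pow, ← pow_mul]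
  field_simp [μ_ne, hCζ]
  ring

end
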